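/- Let N ≥ 1, and let α, β ∈ ℝ with e^{iα} ≠ e^{iβ}. Consider the N×2 Vandermonde matrix V with entries V_{n,1} = e^{i n α} and V_{n,2} = e^{i n β} for n = 0, …, N−1. Then the eigenvalues of V*V are N + |sin(N(α−β)/2)/sin((α−β)/2)| and N − |sin(N(α−β)/2)/sin((α−β)/2)|. -/

import Mathlib

open Complex Matrix

lemma abs_exp_mul_I_sub_one' (θ : ℝ) :
    ‖Complex.exp ((θ : ℂ) * I) - 1‖ = 2 * |Real.sin (θ / 2)| := by
  have h1 : Complex.exp ((θ : ℂ) * I) - 1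
      = ((Real.cos θ - 1 : ℝ) : ℂ) + ((Real.sin θ : ℝ) : ℂ) * I := by
    rw [Complex.exp_mul_I, ← Complex.ofReal_cos, ← Complex.ofReal_sin]
    push_cast; ring
  rw [h1, Complex.norm_add_mul_I]
  have h2 : (Real.cos θ - 1) ^ 2 + Real.sin θ ^ 2 = (2 * |Real.sin (θ / 2)|) ^ 2 := by
    have h3 : Real.sin (θ / 2) ^ 2 = 1 / 2 - Real.cos (2 * (θ / 2)) / 2 :=
      Real.sin_sq_eq_half_sub _
    have h4 := Real.sin_sq_add_cos_sq θ
    rw [show 2 * (θ/2) = θ by ring] at h3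
    rw [mul_pow, _root_.sq_abs]
    nlinarith
  rw [h2, Real.sqrt_sq (by positivity)]

theorem stmt1 (N : ℕ) (hN : 1 ≤ N) (α β : ℝ)
    (hdist : Complex.exp (I * α) ≠ Complex.exp (I * β))
    (V : Matrix (Fin N) (Fin 2) ℂ)
    (hV : ∀ n : Fin N, V n 0 = Complex.exp (I * n * α) ∧ V n 1 = Complex.exp (I * n * β)) :
    spectrum ℂ (Vᴴ * V) =
      {((N + |Real.sin (N * (α - β) / 2) / Real.sin ((α - β) / 2)| : ℝ) : ℂ),
       ((N - |Real.sin (N * (α - β) / 2) / Real.sin ((α - β) / 2)| : ℝ) : ℂ)} := by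
  set c : ℝ := |Real.sin (N * (α - β) / 2) / Real.sin ((α - β) / 2)| with hc
  set z : ℂ := ∑ n : Fin N, Complex.exp (I * n * (β - α)) with hzdef
  -- exp(I(β-α)) ≠ 1
  have hne : Complex.exp (I * ((β : ℂ) - α)) ≠ 1 := by
    intro h
    apply hdist
    have h2 : Complex.exp (I * ((β : ℂ) - α)) * Complex.exp (I * α) = Complex.exp (I * β) := by
      rw [← Complex.exp_add]; ring_nf
    rw [h, one_mul] at h2
    exact h2
  -- conjugates
  have hconj : ∀ (r : ℝ) (n : ℕ),
      (starRingEnd ℂ) (Complex.exp (I * n * r)) = Complex.exp (-(I * n * r)) := by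
    intro r n
    rw [← Complex.exp_conj]
    congr 1
    simp [Complex.conj_I]
  -- matrix entries
  have hM00 : (Vᴴ * V) 0 0 = (N : ℂ) := by
    rw [Matrix.mul_apply]
    simp only [Matrix.conjTranspose_apply, Matrix.star_apply] -- star?
    calc ∑ n : Fin N, star (V n 0) * V n 0
        = ∑ n : Fin N, (1 : ℂ) := by
          refine Finset.sum_congr rfl fun n _ => ?_
          rw [(hV n).1, RCLike.star_def, hconj, ← Complex.exp_add, neg_add_cancel,
            Complex.exp_zero]
      _ = N := by simp
  have hM11 : (Vᴴ * V) 1 1 = (N : ℂ) := by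
    rw [Matrix.mul_apply]
    calc ∑ n : Fin N, Vᴴ 1 n * V n 1
        = ∑ n : Fin N, (1 : ℂ) := by
          refine Finset.sum_congr rfl fun n _ => ?_
          rw [Matrix.conjTranspose_apply, (hV n).2, RCLike.star_def, hconj, ← Complex.exp_add,
            neg_add_cancel, Complex.exp_zero]
      _ = N := by simp
  have hM01 : (Vᴴ * V) 0 1 = z := by
    rw [Matrix.mul_apply, hzdef]
    refine Finset.sum_congr rfl fun n _ => ?_
    rw [Matrix.conjTranspose_apply, (hV n).1, (hV n).2, RCLike.star_def, hconj,
      ← Complex.exp_add]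
    congr 1
    push_cast
    ring
  have hM10 : (Vᴴ * V) 1 0 = (starRingEnd ℂ) z := by
    have h := (Matrix.isHermitian_conjTranspose_mul_self V).apply 0 1
    have h2 : (Vᴴ * V) 1 0 = star ((Vᴴ * V) 0 1) := by rw [← h, star_star]
    rw [h2, hM01]
    rfl
  -- |z| = c
  have habs : ‖z‖ = c := by
    have hterm : ∀ n : Fin N, Complex.exp (I * n * ((β : ℂ) - α))
        = Complex.exp (((β - α : ℝ) : ℂ) * I) ^ (n : ℕ) := by
      intro n
      rw [← Complex.exp_nat_mul]
      congr 1
      push_cast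
      ring
    have hsum : z = (Complex.exp (((β - α : ℝ) : ℂ) * I) ^ N - 1)
        / (Complex.exp (((β - α : ℝ) : ℂ) * I) - 1) := by
      rw [hzdef]
      have : ∀ n : Fin N, Complex.exp (I * n * ((β : ℂ) - α))
          = (fun m : ℕ => Complex.exp (((β - α : ℝ) : ℂ) * I) ^ m) (n : ℕ) := hterm
      rw [Finset.sum_congr rfl fun n _ => this n, Fin.sum_univ_eq_sum_range]
      apply geom_sum_eq
      intro h
      apply hne
      rw [← h]
      congr 1
      push_cast
      ring
    have hpow : Complex.exp (((β - α : ℝ) : ℂ) * I) ^ N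
        = Complex.exp (((N * (β - α) : ℝ) : ℂ) * I) := by
      rw [← Complex.exp_nat_mul]
      congr 1
      push_cast
      ring
    rw [hsum, hpow, norm_div, abs_exp_mul_I_sub_one', abs_exp_mul_I_sub_one']
    have hβα : (β - α) / 2 = -((α - β) / 2) := by ring
    have hNβα : N * (β - α) / 2 = -(N * (α - β) / 2) := by ring
    rw [hβα, hNβα, Real.sin_neg, Real.sin_neg, abs_neg, abs_neg, hc, abs_div,
      mul_div_mul_left _ _ (two_ne_zero)]
  -- z * conj z = c^2
  have hzz : z * (starRingEnd ℂ) z = ((c : ℂ)) ^ 2 := by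
    rw [Complex.mul_conj, Complex.normSq_eq_norm_sq, habs]
    push_cast
    ring
  -- spectrum
  ext x
  simp only [Set.mem_insert_iff, Set.mem_singleton_iff, spectrum.mem_iff,
    Matrix.isUnit_iff_isUnit_det, isUnit_iff_ne_zero, not_ne_iff]
  have hdet : (algebraMap ℂ (Matrix (Fin 2) (Fin 2) ℂ) x - Vᴴ * V).det
      = (x - ((N + c : ℝ) : ℂ)) * (x - ((N - c : ℝ) : ℂ)) := by
    rw [Matrix.det_fin_two]
    simp only [Matrix.sub_apply, Matrix.algebraMap_matrix_apply]
    norm_num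
    rw [hM00, hM11, hM01, hM10]
    push_cast
    linear_combination -hzz
  rw [hdet, mul_eq_zero, sub_eq_zero, sub_eq_zero]
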